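/- Let X : H0 -> H1 be a contractive solution of the Riccati equation such that the orthogonal projection Q onto G(H0,X) commutes with the orthogonal projection onto every closed B-invariant subspace of H. If X is strictly contractive, i.e., ||Xx|| < ||x|| for every nonzero x in H0, then X is the unique contractive solution of the Riccati equation. -/

import Mathlib

noncomputable section

/-- Equality case for contractions: if `‖T‖ ≤ 1` and `‖T† w‖ = ‖w‖` then `T (T† w) = w`. -/
private lemma self_comp_adj_eq {E F : Type*}
    [NormedAddCommGroup E] [InnerProductSpace ℂ E] [CompleteSpace E]
    [NormedAddCommGroup F] [InnerProductSpace ℂ F] [CompleteSpace F]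
    (T : E →L[ℂ] F) (hT : ‖T‖ ≤ 1) (w : F)
    (hw : ‖ContinuousLinearMap.adjoint T w‖ = ‖w‖) :
    T (ContinuousLinearMap.adjoint T w) = w := by
  set a := ContinuousLinearMap.adjoint T w with ha
  have h1 : ‖T a‖ ≤ ‖w‖ := by
    calc ‖T a‖ ≤ ‖T‖ * ‖a‖ := T.le_opNorm a
      _ ≤ 1 * ‖w‖ := by
          apply mul_le_mul hT hw.le (norm_nonneg _) zero_le_one
      _ = ‖w‖ := one_mul _
  have hre : RCLike.re (inner (𝕜 := ℂ) (T a) w) = ‖w‖ ^ 2 := by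
    rw [inner_re_symm, ← ContinuousLinearMap.adjoint_inner_left, ← ha,
      @inner_self_eq_norm_sq ℂ, hw]
  have hsq : ‖T a - w‖ ^ 2 ≤ 0 := by
    rw [@norm_sub_sq ℂ]
    nlinarith [norm_nonneg (T a), sq_nonneg ‖w‖]
  have hz : ‖T a - w‖ = 0 := by
    nlinarith [norm_nonneg (T a - w)]
  rw [norm_eq_zero, sub_eq_zero] at hz
  exact hz

set_option maxHeartbeats 1000000 in
theorem unique_contractive_solution_of_strict_contraction
    {H0 H1 : Type*}
    [NormedAddCommGroup H0] [InnerProductSpace ℂ H0] [CompleteSpace H0]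
    [TopologicalSpace.SeparableSpace H0]
    [NormedAddCommGroup H1] [InnerProductSpace ℂ H1] [CompleteSpace H1]
    [TopologicalSpace.SeparableSpace H1]
    (A0 : H0 →L[ℂ] H0) (A1 : H1 →L[ℂ] H1) (V : H1 →L[ℂ] H0)
    (hA0 : IsSelfAdjoint A0) (hA1 : IsSelfAdjoint A1)
    (B : WithLp 2 (H0 × H1) →L[ℂ] WithLp 2 (H0 × H1))
    (hB : ∀ u : WithLp 2 (H0 × H1),
      WithLp.equiv 2 (H0 × H1) (B u) =
        (A0 (WithLp.equiv 2 (H0 × H1) u).1 + V (WithLp.equiv 2 (H0 × H1) u).2,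
         ContinuousLinearMap.adjoint V (WithLp.equiv 2 (H0 × H1) u).1
           + A1 (WithLp.equiv 2 (H0 × H1) u).2))
    (X : H0 →L[ℂ] H1) (hXnorm : ‖X‖ ≤ 1)
    (hX : A1.comp X - X.comp A0 - X.comp (V.comp X) + ContinuousLinearMap.adjoint V = 0)
    (Q : WithLp 2 (H0 × H1) →L[ℂ] WithLp 2 (H0 × H1))
    (hQ : IsIdempotentElem Q) (hQsa : IsSelfAdjoint Q)
    (hQran : LinearMap.range Q.toLinearMap =
      (LinearMap.graph X.toLinearMap).map (WithLp.linearEquiv 2 ℂ (H0 × H1)).symm.toLinearMap)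
    (hQcomm : ∀ R : WithLp 2 (H0 × H1) →L[ℂ] WithLp 2 (H0 × H1),
      IsIdempotentElem R → IsSelfAdjoint R →
      (∀ u ∈ LinearMap.range R.toLinearMap, B u ∈ LinearMap.range R.toLinearMap) → Q * R = R * Q)
    (hstrict : ∀ x : H0, x ≠ 0 → ‖X x‖ < ‖x‖) :
    ∀ Y : H0 →L[ℂ] H1, ‖Y‖ ≤ 1 →
        A1.comp Y - Y.comp A0 - Y.comp (V.comp Y) + ContinuousLinearMap.adjoint V = 0 →
        Y = X := by
  intro Y hYnorm hY
  set e := WithLp.linearEquiv 2 ℂ (H0 × H1) with he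
  -- the graph of Y as a submodule of the ℓ² direct sum
  set K : Submodule ℂ (WithLp 2 (H0 × H1)) :=
    (LinearMap.graph Y.toLinearMap).map e.symm.toLinearMap with hK
  have hmemK : ∀ u, u ∈ K ↔ (e u).2 = Y (e u).1 := by
    intro u
    simp only [hK, Submodule.mem_map, LinearMap.mem_graph_iff]
    constructor
    · rintro ⟨p, hp, rfl⟩
      simpa using hp
    · intro h
      exact ⟨e u, h, by simp⟩
  have hmemK' : ∀ x : H0, e.symm (x, Y x) ∈ K := by
    intro x; rw [hmemK]; simp
  -- closedness and completeness of K
  have hclosed : IsClosed (K : Set (WithLp 2 (H0 × H1))) := by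
    have : (K : Set (WithLp 2 (H0 × H1))) =
        {u | ((WithLp.prodContinuousLinearEquiv 2 ℂ H0 H1) u).2 =
          Y ((WithLp.prodContinuousLinearEquiv 2 ℂ H0 H1) u).1} := by
      ext u; exact hmemK u
    rw [this]
    exact isClosed_eq (by fun_prop) (by fun_prop)
  have : CompleteSpace K := hclosed.completeSpace_coe
  -- the orthogonal projection onto K
  set R : WithLp 2 (H0 × H1) →L[ℂ] WithLp 2 (H0 × H1) :=
    K.subtypeL.comp (K.orthogonalProjectionOnto) with hR
  have hRfix : ∀ u ∈ K, R u = u := by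
    intro u hu
    simp only [hR, ContinuousLinearMap.comp_apply, Submodule.subtypeL_apply]
    exact K.starProjection_eq_self_iff.mpr hu
  have hRmem : ∀ v, R v ∈ K := fun v => (K.orthogonalProjectionOnto v).2
  have hRidem : IsIdempotentElem R := by
    ext v
    exact hRfix (R v) (hRmem v)
  have hRsa : IsSelfAdjoint R := isSelfAdjoint_starProjection K
  have hRran : LinearMap.range R.toLinearMap = K := by
    apply le_antisymm
    · rintro _ ⟨v, rfl⟩; exact hRmem v
    · intro u hu; exact ⟨u, hRfix u hu⟩
  -- pointwise Riccati identity for Y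
  have hYric : ∀ x : H0, ContinuousLinearMap.adjoint V x + A1 (Y x) = Y (A0 x + V (Y x)) := by
    intro x
    have h := congrArg (fun T : H0 →L[ℂ] H1 => T x) hY
    simp only [ContinuousLinearMap.sub_apply, ContinuousLinearMap.add_apply,
      ContinuousLinearMap.comp_apply, ContinuousLinearMap.zero_apply] at h
    have : A1 (Y x) - Y (A0 x) - Y (V (Y x)) + ContinuousLinearMap.adjoint V x = 0 := h
    rw [map_add]
    linear_combination (norm := abel) this
  -- B-invariance of K
  have hBinv : ∀ u ∈ LinearMap.range R.toLinearMap, B u ∈ LinearMap.range R.toLinearMap := by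
    rw [hRran]
    intro u hu
    rw [hmemK] at hu ⊢
    have hfst : (e (B u)).1 = A0 (e u).1 + V (e u).2 := congrArg Prod.fst (hB u)
    have hsnd : (e (B u)).2 = ContinuousLinearMap.adjoint V (e u).1 + A1 (e u).2 :=
      congrArg Prod.snd (hB u)
    rw [hfst, hsnd, hu]
    exact hYric (e u).1
  have hcomm : Q * R = R * Q := hQcomm R hRidem hRsa hBinv
  -- members of range Q
  have hmemQ : ∀ u, u ∈ LinearMap.range Q.toLinearMap ↔ (e u).2 = X (e u).1 := by
    intro u
    rw [hQran]
    constructor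
    · rintro ⟨p, hp, rfl⟩
      have hep : e ((WithLp.linearEquiv 2 ℂ (H0 × H1)).symm.toLinearMap p) = p :=
        e.apply_symm_apply p
      rw [hep]
      exact (LinearMap.mem_graph_iff _ _).mp hp
    · intro h
      exact ⟨e u, (LinearMap.mem_graph_iff _ _).mpr h, e.symm_apply_apply u⟩
  have hQfix : ∀ u, Q (Q u) = Q u := fun u => congrArg (fun T => T u) hQ.eq
  have hRfix' : ∀ u, R (R u) = R u := fun u => congrArg (fun T => T u) hRidem.eq
  -- Step A : Q ∘ (1 - R) = 0
  have stepA : ∀ v, Q v = Q (R v) := by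
    intro v
    set u := Q (v - R v) with hu
    have hQu : Q u = u := hQfix _
    have hRu : R u = 0 := by
      have h1 : R (Q (v - R v)) = Q (R (v - R v)) := by
        have := congrArg (fun T => T (v - R v)) hcomm.symm
        simpa using this
      rw [hu, h1, map_sub, hRfix' v, sub_self, map_zero]
    -- u belongs to the graph of X
    have huQ : (e u).2 = X (e u).1 := (hmemQ u).mp ⟨v - R v, rfl⟩
    -- u is orthogonal to K
    have hperp : ∀ w ∈ K, inner (𝕜 := ℂ) w u = 0 := by
      intro w hw
      calc inner (𝕜 := ℂ) w u = inner (𝕜 := ℂ) (R w) u := by rw [hRfix w hw]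
        _ = inner (𝕜 := ℂ) (ContinuousLinearMap.adjoint R w) u := by rw [hRsa.adjoint_eq]
        _ = inner (𝕜 := ℂ) w (R u) := ContinuousLinearMap.adjoint_inner_left R u w
        _ = 0 := by rw [hRu, inner_zero_right]
    set x := (e u).1 with hx
    have hkey : x + ContinuousLinearMap.adjoint Y (X x) = 0 := by
      apply ext_inner_left ℂ
      intro x'
      have h0 := hperp (e.symm (x', Y x')) (hmemK' x')
      rw [WithLp.prod_inner_apply] at h0
      have h0' : inner (𝕜 := ℂ) x' (e u).1 + inner (𝕜 := ℂ) (Y x') (e u).2 = 0 := h0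
      rw [huQ] at h0'
      rw [inner_add_right, inner_zero_right, ContinuousLinearMap.adjoint_inner_right]
      exact h0'
    have hx0 : x = 0 := by
      by_contra hne
      have h1 : ‖x‖ = ‖ContinuousLinearMap.adjoint Y (X x)‖ := by
        conv_lhs => rw [eq_neg_of_add_eq_zero_left hkey]
        rw [norm_neg]
      have h2 : ‖ContinuousLinearMap.adjoint Y (X x)‖ ≤ ‖X x‖ := by
        calc ‖ContinuousLinearMap.adjoint Y (X x)‖ ≤ ‖ContinuousLinearMap.adjoint Y‖ * ‖X x‖ :=
              (ContinuousLinearMap.adjoint Y).le_opNorm _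
          _ ≤ 1 * ‖X x‖ := by
              apply mul_le_mul _ le_rfl (norm_nonneg _) zero_le_one
              simpa [LinearIsometryEquiv.norm_map] using hYnorm
          _ = ‖X x‖ := one_mul _
      have h3 := hstrict x hne
      linarith
    have hu0 : u = 0 := by
      have h2 : (e u).2 = 0 := by rw [huQ, hx0, map_zero]
      have he0 : e u = 0 := Prod.ext hx0 h2
      apply e.injective
      simpa using he0
    rw [hu, map_sub] at hu0
    exact (sub_eq_zero.mp hu0)
  -- Step B : R ∘ (1 - Q) = 0
  have stepB : ∀ v, R v = R (Q v) := by
    intro v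
    set u := R (v - Q v) with hu
    have hRu : R u = u := hRfix' _
    have hQu : Q u = 0 := by
      have h1 : Q (R (v - Q v)) = R (Q (v - Q v)) := by
        have := congrArg (fun T => T (v - Q v)) hcomm
        simpa using this
      rw [hu, h1, map_sub, hQfix v, sub_self, map_zero]
    -- u belongs to the graph of Y
    have huR : (e u).2 = Y (e u).1 := by
      rw [← hmemK u, ← hRran]
      exact ⟨v - Q v, rfl⟩
    -- u is orthogonal to range Q
    have hperp : ∀ x' : H0, inner (𝕜 := ℂ) (e.symm (x', X x')) u = 0 := by
      intro x'
      have hmem : e.symm (x', X x') ∈ LinearMap.range Q.toLinearMap := by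
        rw [hmemQ]; simp
      obtain ⟨w', hw'⟩ := hmem
      calc inner (𝕜 := ℂ) (e.symm (x', X x')) u = inner (𝕜 := ℂ) (Q w') u :=
          congrArg (fun z => inner (𝕜 := ℂ) z u) hw'.symm
        _ = inner (𝕜 := ℂ) (ContinuousLinearMap.adjoint Q w') u := by rw [hQsa.adjoint_eq]
        _ = inner (𝕜 := ℂ) w' (Q u) := ContinuousLinearMap.adjoint_inner_left Q u w'
        _ = 0 := by rw [hQu, inner_zero_right]
    set y := (e u).1 with hy
    have hkey : y + ContinuousLinearMap.adjoint X (Y y) = 0 := by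
      apply ext_inner_left ℂ
      intro x'
      have h0 := hperp x'
      rw [WithLp.prod_inner_apply] at h0
      have h0' : inner (𝕜 := ℂ) x' (e u).1 + inner (𝕜 := ℂ) (X x') (e u).2 = 0 := h0
      rw [huR] at h0'
      rw [inner_add_right, inner_zero_right, ContinuousLinearMap.adjoint_inner_right]
      exact h0'
    have hy0 : y = 0 := by
      by_contra hne
      set w := Y y with hw
      have h1 : ‖y‖ = ‖ContinuousLinearMap.adjoint X w‖ := by
        conv_lhs => rw [eq_neg_of_add_eq_zero_left hkey]
        rw [norm_neg]
      have h2 : ‖ContinuousLinearMap.adjoint X w‖ ≤ ‖w‖ := by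
        calc ‖ContinuousLinearMap.adjoint X w‖ ≤ ‖ContinuousLinearMap.adjoint X‖ * ‖w‖ :=
              (ContinuousLinearMap.adjoint X).le_opNorm _
          _ ≤ 1 * ‖w‖ := by
              apply mul_le_mul _ le_rfl (norm_nonneg _) zero_le_one
              simpa [LinearIsometryEquiv.norm_map] using hXnorm
          _ = ‖w‖ := one_mul _
      have h3 : ‖w‖ ≤ ‖y‖ := by
        calc ‖w‖ = ‖Y y‖ := rfl
          _ ≤ ‖Y‖ * ‖y‖ := Y.le_opNorm y
          _ ≤ 1 * ‖y‖ := mul_le_mul hYnorm le_rfl (norm_nonneg _) zero_le_one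
          _ = ‖y‖ := one_mul _
      -- so ‖X† w‖ = ‖w‖ = ‖y‖ and w ≠ 0
      have heq1 : ‖ContinuousLinearMap.adjoint X w‖ = ‖w‖ := le_antisymm h2 (by linarith)
      have hwne : w ≠ 0 := by
        intro h0
        apply hne
        have : ContinuousLinearMap.adjoint X w = 0 := by rw [h0, map_zero]
        have := add_eq_zero_iff_eq_neg.mp hkey
        rw [‹ContinuousLinearMap.adjoint X w = 0›] at this
        simpa using this
      -- equality case: X (X† w) = w
      have hXXw : X (ContinuousLinearMap.adjoint X w) = w :=
        self_comp_adj_eq X hXnorm w heq1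
      have hane : ContinuousLinearMap.adjoint X w ≠ 0 := by
        intro h0
        apply hwne
        rw [← hXXw, h0, map_zero]
      have := hstrict _ hane
      rw [hXXw, heq1] at this
      exact lt_irrefl _ this
    have hu0 : u = 0 := by
      have h2 : (e u).2 = 0 := by rw [huR, hy0, map_zero]
      have he0 : e u = 0 := Prod.ext hy0 h2
      apply e.injective
      simpa using he0
    rw [hu, map_sub] at hu0
    exact (sub_eq_zero.mp hu0)
  -- Q = R
  have hQR : Q = R := by
    ext v
    calc Q v = Q (R v) := stepA v
      _ = (Q * R) v := rfl
      _ = (R * Q) v := by rw [hcomm]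
      _ = R (Q v) := rfl
      _ = R v := (stepB v).symm
  -- conclude Y = X
  ext x
  have hmem : e.symm (x, Y x) ∈ LinearMap.range Q.toLinearMap := by
    rw [hQR, hRran]; exact hmemK' x
  rw [hmemQ] at hmem
  simpa using hmem

end
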